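/- Let E be a Courant algebroid with decomposition E = ℓ ⊕ ℓ̄ ⊕ C₋ satisfying ⟨ℓ,ℓ⟩ = ⟨ℓ̄,ℓ̄⟩ = 0, ⟨e^j, e_k⟩ = δ_{jk} for dual frames, the F-term condition, [e_j, e_k] = 0 for all j,k, the D-term equation (1/2)Σ_j [e^j, e_j] = u − u_ℓ for a section u with [u,·] = 0. Then the function R := Σ_{j,k} ( 3⟨[e^j,e_j]₋, [e^k,e_k]₋⟩ − ⟨[e^j,e_k]₋, [e^k,e_j]₋⟩ ) equals −4 Σ_j ⟨[e^j, u], e_j⟩ + 8⟨u₋, u₋⟩, where subscript − denotes the C₋-component. -/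

import Mathlib

/-!
STATEMENT 19: under the F-term condition, `[e_j,e_k] = 0`, and the D-term
equation `(1/2) Σ_j [e^j,e_j] = u − u_ℓ` for a section `u` with `[u,·] = 0`,
the function
`R = Σ_{j,k} (3⟨[e^j,e_j]₋,[e^k,e_k]₋⟩ − ⟨[e^j,e_k]₋,[e^k,e_j]₋⟩)`
equals `−4 Σ_j ⟨[e^j,u],e_j⟩ + 8⟨u₋,u₋⟩`.
-/

/-!
STATEMENT 0: In a Courant algebroid `E` over `M` (sections form a module over the
smooth functions `C`), for all sections `a b` and functions `f`:
`[f•a, b] = f•[a,b] − f•D⟨a,b⟩ − ⟨Df,b⟩•a + D⟨b, f•a⟩`.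
-/

/-- A Courant algebroid, presented algebraically: `C` plays the role of the ring of
smooth functions `C^∞(M)` and `E` the module of sections, with pairing, Dorfman
bracket, anchor (acting on functions as derivations) and the operator `D`
characterized by `⟨Df, a⟩ = π(a)(f)`. -/
structure CourantAlgebroid (C : Type*) [CommRing C] (E : Type*) [AddCommGroup E]
    [Module C E] where
  /-- the non-degenerate symmetric bilinear form `⟨·,·⟩` -/
  pair : E →ₗ[C] E →ₗ[C] C
  /-- the Dorfman bracket `[·,·]` -/
  bracket : E → E → E
  /-- the anchor map `π`, acting on functions -/
  anchor : E → C → C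
  /-- the operator `D : C^∞(M) → Γ(E)` -/
  Dop : C → E
  pair_symm : ∀ a b, pair a b = pair b a
  pair_nondeg : ∀ a, (∀ b, pair a b = 0) → a = 0
  anchor_add : ∀ a f g, anchor a (f + g) = anchor a f + anchor a g
  anchor_mul : ∀ a f g, anchor a (f * g) = f * anchor a g + g * anchor a f
  anchor_smul : ∀ (f : C) a g, anchor (f • a) g = f * anchor a g
  /-- `⟨Df, a⟩ = π(a)(f)` -/
  pair_Dop : ∀ f a, pair (Dop f) a = anchor a f
  bracket_add_left : ∀ a b c, bracket (a + b) c = bracket a c + bracket b c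
  bracket_add_right : ∀ a b c, bracket a (b + c) = bracket a b + bracket a c
  /-- axiom (1): Jacobi/Leibniz identity for the Dorfman bracket -/
  jacobi : ∀ a b c, bracket a (bracket b c) = bracket (bracket a b) c + bracket b (bracket a c)
  /-- axiom (2): `π[a,b] = [π a, π b]` -/
  anchor_bracket : ∀ a b f, anchor (bracket a b) f = anchor a (anchor b f) - anchor b (anchor a f)
  /-- axiom (3): `[a, f b] = f [a,b] + (π a f) b` -/
  leibniz : ∀ a (f : C) b, bracket a (f • b) = f • bracket a b + anchor a f • b
  /-- axiom (4): `π(a)⟨b,c⟩ = ⟨[a,b],c⟩ + ⟨b,[a,c]⟩` -/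
  anchor_pair : ∀ a b c, anchor a (pair b c) = pair (bracket a b) c + pair b (bracket a c)
  /-- axiom (5): `[a,b] + [b,a] = D⟨a,b⟩` -/
  bracket_symm : ∀ a b, bracket a b + bracket b a = Dop (pair a b)


section Aux
variable {C : Type*} [CommRing C] {E : Type*} [AddCommGroup E] [Module C E]
  (CA : CourantAlgebroid C E)

lemma CA_an_zero (a : E) : CA.anchor a 0 = 0 := by
  have h := CA.anchor_add a 0 0
  rw [add_zero] at h
  exact (left_eq_add.mp h)

lemma CA_an_one (a : E) : CA.anchor a 1 = 0 := by
  have h := CA.anchor_mul a 1 1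
  rw [mul_one, one_mul] at h
  exact (left_eq_add.mp h)

lemma CA_an_if (a : E) (P : Prop) [Decidable P] :
    CA.anchor a (if P then (1:C) else 0) = 0 := by
  split_ifs
  · exact CA_an_one CA a
  · exact CA_an_zero CA a

lemma CA_an_neg (a : E) (f : C) : CA.anchor a (-f) = -CA.anchor a f := by
  have h := CA.anchor_add a f (-f)
  rw [add_neg_cancel] at h
  rw [CA_an_zero CA a] at h
  linear_combination -h

lemma CA_an_sum {ι : Type*} (s : Finset ι) (f : ι → C) (a : E) :
    CA.anchor a (∑ i ∈ s, f i) = ∑ i ∈ s, CA.anchor a (f i) := by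
  classical
  induction s using Finset.induction_on with
  | empty => simpa using CA_an_zero CA a
  | insert _ _ hx ih =>
      rw [Finset.sum_insert hx, Finset.sum_insert hx, CA.anchor_add, ih]

lemma CA_D_zero : CA.Dop 0 = 0 :=
  CA.pair_nondeg _ fun b => by rw [CA.pair_Dop]; exact CA_an_zero CA b

lemma CA_D_one : CA.Dop 1 = 0 :=
  CA.pair_nondeg _ fun b => by rw [CA.pair_Dop]; exact CA_an_one CA b

lemma CA_D_if (P : Prop) [Decidable P] : CA.Dop (if P then (1:C) else 0) = 0 := by
  split_ifs
  · exact CA_D_one CA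
  · exact CA_D_zero CA

lemma CA_pair_D (f : C) (a : E) : CA.pair a (CA.Dop f) = CA.anchor a f := by
  rw [CA.pair_symm, CA.pair_Dop]

lemma CA_br_zero_right (a : E) : CA.bracket a 0 = 0 := by
  have h := CA.bracket_add_right a 0 0
  rw [add_zero] at h
  exact (left_eq_add.mp h)

lemma CA_br_zero_left (a : E) : CA.bracket 0 a = 0 := by
  have h := CA.bracket_add_left 0 0 a
  rw [add_zero] at h
  exact (left_eq_add.mp h)

lemma CA_br_sub_right (a b c : E) :
    CA.bracket a (b - c) = CA.bracket a b - CA.bracket a c := by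
  have h := CA.bracket_add_right a (b - c) c
  rw [sub_add_cancel] at h
  exact eq_sub_of_add_eq h.symm

lemma CA_br_sum_left {ι : Type*} (s : Finset ι) (f : ι → E) (b : E) :
    CA.bracket (∑ i ∈ s, f i) b = ∑ i ∈ s, CA.bracket (f i) b := by
  classical
  induction s using Finset.induction_on with
  | empty => simpa using CA_br_zero_left CA b
  | insert _ _ hx ih =>
      rw [Finset.sum_insert hx, Finset.sum_insert hx, CA.bracket_add_left, ih]

lemma CA_br_sum_right {ι : Type*} (s : Finset ι) (f : ι → E) (b : E) :
    CA.bracket b (∑ i ∈ s, f i) = ∑ i ∈ s, CA.bracket b (f i) := by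
  classical
  induction s using Finset.induction_on with
  | empty => simpa using CA_br_zero_right CA b
  | insert _ _ hx ih =>
      rw [Finset.sum_insert hx, Finset.sum_insert hx, CA.bracket_add_right, ih]

/-- STATEMENT 0 style formula for the bracket with a scaled first argument. -/
lemma CA_br_smul_left (f : C) (a b : E) :
    CA.bracket (f • a) b = f • CA.bracket a b - f • CA.Dop (CA.pair a b)
      - CA.anchor b f • a + CA.Dop (f * CA.pair a b) := by
  have h1 := CA.bracket_symm (f • a) b
  have h2 := CA.leibniz b f a
  have h3 := CA.bracket_symm a b
  have hpair : CA.pair (f • a) b = f * CA.pair a b := by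
    rw [map_smul]; rfl
  rw [hpair] at h1
  have hba : CA.bracket b a = CA.Dop (CA.pair a b) - CA.bracket a b :=
    eq_sub_of_add_eq (by linear_combination (norm := abel_nf) h3)
  rw [h2, hba, smul_sub] at h1
  linear_combination (norm := abel_nf) h1

end Aux
theorem dterm_R_identity
    {C : Type*} [CommRing C] {E : Type*} [AddCommGroup E] [Module C E]
    (CA : CourantAlgebroid C E)
    (L Lbar Cm : Submodule C E)
    (pL pLbar pm : E →ₗ[C] E)
    (hsum : ∀ a, pL a + pLbar a + pm a = a)
    (hpL_mem : ∀ a, pL a ∈ L) (hpLbar_mem : ∀ a, pLbar a ∈ Lbar) (hpm_mem : ∀ a, pm a ∈ Cm)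
    (hpL_L : ∀ a ∈ L, pL a = a) (hpL_Lbar : ∀ a ∈ Lbar, pL a = 0) (hpL_Cm : ∀ a ∈ Cm, pL a = 0)
    (hpLbar_Lbar : ∀ a ∈ Lbar, pLbar a = a) (hpLbar_L : ∀ a ∈ L, pLbar a = 0)
    (hpLbar_Cm : ∀ a ∈ Cm, pLbar a = 0)
    (hpm_Cm : ∀ a ∈ Cm, pm a = a) (hpm_L : ∀ a ∈ L, pm a = 0) (hpm_Lbar : ∀ a ∈ Lbar, pm a = 0)
    (hisoL : ∀ a ∈ L, ∀ b ∈ L, CA.pair a b = 0)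
    (hisoLbar : ∀ a ∈ Lbar, ∀ b ∈ Lbar, CA.pair a b = 0)
    (horthL : ∀ a ∈ Cm, ∀ b ∈ L, CA.pair a b = 0)
    (horthLbar : ∀ a ∈ Cm, ∀ b ∈ Lbar, CA.pair a b = 0)
    -- the F-term condition
    (hFtermL : ∀ a ∈ L, ∀ b ∈ L, CA.bracket a b ∈ L)
    (hFtermLbar : ∀ a ∈ Lbar, ∀ b ∈ Lbar, CA.bracket a b ∈ Lbar)
    -- dual isotropic frames {e^j} ⊂ ℓ, {e_j} ⊂ ℓ̄ with ⟨e^j,e_k⟩ = δ_{jk}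
    {m : ℕ} (eSup eInf : Fin m → E)
    (heSup : ∀ j, eSup j ∈ L) (heInf : ∀ j, eInf j ∈ Lbar)
    (hdual : ∀ j k, CA.pair (eSup j) (eInf k) = if j = k then 1 else 0)
    (hspanL : ∀ x ∈ L, x = ∑ j, CA.pair x (eInf j) • eSup j)
    (hspanLbar : ∀ x ∈ Lbar, x = ∑ j, CA.pair x (eSup j) • eInf j)
    -- the frames satisfy [e_j, e_k] = 0
    (hcomm : ∀ j k, CA.bracket (eInf j) (eInf k) = 0)
    -- a section u with [u, ·] = 0 …
    (u : E) (hu : ∀ a : E, CA.bracket u a = 0)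
    -- … solving the D-term equation (1/2) Σ_j [e^j, e_j] = u − u_ℓ
    (hDterm : ∑ j, CA.bracket (eSup j) (eInf j) = 2 • (u - pL u)) :
    -- R = Σ_{j,k} (3⟨[e^j,e_j]₋,[e^k,e_k]₋⟩ − ⟨[e^j,e_k]₋,[e^k,e_j]₋⟩)
    --   = −4 Σ_j ⟨[e^j,u],e_j⟩ + 8 ⟨u₋,u₋⟩
    (∑ j, ∑ k,
        ((3 : C) * CA.pair (pm (CA.bracket (eSup j) (eInf j))) (pm (CA.bracket (eSup k) (eInf k)))
          - CA.pair (pm (CA.bracket (eSup j) (eInf k))) (pm (CA.bracket (eSup k) (eInf j)))))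
      = -(4 : C) * (∑ j, CA.pair (CA.bracket (eSup j) u) (eInf j))
          + (8 : C) * CA.pair (pm u) (pm u) := by
  classical
  -- symmetric duality
  have hd' : ∀ j k, CA.pair (eInf k) (eSup j) = if j = k then 1 else 0 := fun j k => by
    rw [CA.pair_symm]; exact hdual j k
  -- brackets [e^j,e_k] have vanishing pairing with all e_s (no ℓ-component)
  have hBs : ∀ j k s, CA.pair (CA.bracket (eSup j) (eInf k)) (eInf s) = 0 := by
    intro j k s
    have h3 := CA.anchor_pair (eInf s) (eInf k) (eSup j)
    rw [hcomm s k, hd' j k, CA_an_if] at h3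
    simp only [map_zero, LinearMap.zero_apply, zero_add] at h3
    have h2 : CA.bracket (eSup j) (eInf s) =
        CA.Dop (if j = s then 1 else 0) - CA.bracket (eInf s) (eSup j) := by
      have h := CA.bracket_symm (eSup j) (eInf s)
      rw [hdual] at h
      exact eq_sub_of_add_eq h
    have h1 := CA.anchor_pair (eSup j) (eInf k) (eInf s)
    rw [hisoLbar _ (heInf k) _ (heInf s), CA_an_zero, h2, map_sub, CA_D_if,
      map_zero] at h1
    linear_combination -h1 - h3
  -- projection/pairing compatibility
  have hpair_eInf : ∀ (x : E) (s : Fin m),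
      CA.pair x (eInf s) = CA.pair (pL x) (eInf s) := by
    intro x s
    conv_lhs => rw [← hsum x]
    rw [map_add, map_add, LinearMap.add_apply, LinearMap.add_apply,
      hisoLbar _ (hpLbar_mem x) _ (heInf s), horthLbar _ (hpm_mem x) _ (heInf s)]
    ring
  have hpair_eSup : ∀ (x : E) (s : Fin m),
      CA.pair x (eSup s) = CA.pair (pLbar x) (eSup s) := by
    intro x s
    conv_lhs => rw [← hsum x]
    rw [map_add, map_add, LinearMap.add_apply, LinearMap.add_apply,
      hisoL _ (hpL_mem x) _ (heSup s), horthL _ (hpm_mem x) _ (heSup s)]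
    ring
  -- [e^j, e_k] has no ℓ-component
  have hnoL : ∀ j k, pL (CA.bracket (eSup j) (eInf k)) = 0 := by
    intro j k
    have hx := hspanL _ (hpL_mem (CA.bracket (eSup j) (eInf k)))
    rw [hx]
    refine Finset.sum_eq_zero fun s _ => ?_
    rw [← hpair_eInf, hBs j k s, zero_smul]
  -- ℓ-component of u in the frame
  have hpLu : pL u = ∑ s, CA.pair u (eInf s) • eSup s := by
    have hx := hspanL _ (hpL_mem u)
    rw [hx]
    exact Finset.sum_congr rfl fun s _ => by rw [← hpair_eInf]
  -- D-term restated
  have hDterm' : ∑ j, CA.bracket (eSup j) (eInf j) = (u - pL u) + (u - pL u) := by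
    rw [hDterm, two_smul]
  -- key identity: ⟨[e^k,e^j],e_j⟩ = ⟨[e^j,e_j],e^k⟩
  have key0 : ∀ k j, CA.pair (CA.bracket (eSup k) (eSup j)) (eInf j)
      = CA.pair (CA.bracket (eSup j) (eInf j)) (eSup k) := by
    intro k j
    have hA := CA.anchor_pair (eSup k) (eSup j) (eInf j)
    rw [hdual j j, CA_an_if] at hA
    have hB : CA.bracket (eSup k) (eInf j) =
        CA.Dop (if k = j then 1 else 0) - CA.bracket (eInf j) (eSup k) := by
      have h := CA.bracket_symm (eSup k) (eInf j); rw [hdual] at h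
      exact eq_sub_of_add_eq h
    rw [hB, map_sub, CA_D_if, map_zero] at hA
    have hC := CA.anchor_pair (eInf j) (eSup j) (eSup k)
    rw [hisoL _ (heSup j) _ (heSup k), CA_an_zero] at hC
    have hD : CA.bracket (eInf j) (eSup j) = -CA.bracket (eSup j) (eInf j) := by
      have h := CA.bracket_symm (eSup j) (eInf j); rw [hdual] at h
      rw [if_pos rfl] at h
      rw [CA_D_one] at h
      exact eq_neg_of_add_eq_zero_right h
    rw [hD, map_neg, LinearMap.neg_apply] at hC
    linear_combination -hA - hC
  -- key1 : Σ_j ⟨[e^k,e^j],e_j⟩ = 2⟨u,e^k⟩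
  have key1 : ∀ k, ∑ j, CA.pair (CA.bracket (eSup k) (eSup j)) (eInf j)
      = 2 * CA.pair u (eSup k) := by
    intro k
    have h1 : ∑ j, CA.pair (CA.bracket (eSup k) (eSup j)) (eInf j)
        = ∑ j, CA.pair (CA.bracket (eSup j) (eInf j)) (eSup k) :=
      Finset.sum_congr rfl fun j _ => key0 k j
    have h2 : CA.pair (∑ j, CA.bracket (eSup j) (eInf j)) (eSup k)
        = ∑ j, CA.pair (CA.bracket (eSup j) (eInf j)) (eSup k) := by
      rw [map_sum]; exact LinearMap.sum_apply _ _ _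
    rw [h1, ← h2, hDterm', map_add, LinearMap.add_apply, map_sub,
      LinearMap.sub_apply, hisoL _ (hpL_mem u) _ (heSup k)]
    ring
  -- bracket with u on the right is a D-term
  have hbru : ∀ a : E, CA.bracket a u = CA.Dop (CA.pair a u) := by
    intro a
    have h := CA.bracket_symm a u
    rwa [hu a, add_zero] at h
  -- antisymmetry of [e^a, e^b]
  have hLLanti : ∀ a b, CA.bracket (eSup a) (eSup b) = -CA.bracket (eSup b) (eSup a) := by
    intro a b
    have h := CA.bracket_symm (eSup a) (eSup b)
    rw [hisoL _ (heSup a) _ (heSup b), CA_D_zero] at h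
    exact eq_neg_of_add_eq_zero_left h
  -- ⟨u, pL u⟩
  have hG : CA.pair u (pL u) = ∑ s, CA.pair u (eInf s) * CA.pair u (eSup s) := by
    rw [hpLu, map_sum]
    exact Finset.sum_congr rfl fun s _ => by rw [map_smul, smul_eq_mul]
  have hpLbaru : pLbar u = ∑ s, CA.pair u (eSup s) • eInf s := by
    have hx := hspanLbar _ (hpLbar_mem u)
    rw [hx]
    exact Finset.sum_congr rfl fun s _ => by rw [← hpair_eSup]
  have hGbar : CA.pair u u =
      2 * (∑ s, CA.pair u (eInf s) * CA.pair u (eSup s)) + CA.pair (pm u) (pm u) := by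
    have h1 : CA.pair (pL u + pLbar u + pm u) u
        = CA.pair (pL u) u + CA.pair (pLbar u) u + CA.pair (pm u) u := by
      rw [map_add, map_add, LinearMap.add_apply, LinearMap.add_apply]
    rw [hsum u] at h1
    have e1 : CA.pair (pL u) u = ∑ s, CA.pair u (eInf s) * CA.pair u (eSup s) := by
      rw [hpLu, map_sum, LinearMap.sum_apply]
      exact Finset.sum_congr rfl fun s _ => by
        rw [LinearMap.map_smul, LinearMap.smul_apply, smul_eq_mul,
          CA.pair_symm (eSup s) u]
    have e2 : CA.pair (pLbar u) u = ∑ s, CA.pair u (eInf s) * CA.pair u (eSup s) := by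
      rw [hpLbaru, map_sum, LinearMap.sum_apply]
      refine Finset.sum_congr rfl fun s _ => ?_
      rw [LinearMap.map_smul, LinearMap.smul_apply, smul_eq_mul,
        CA.pair_symm (eInf s) u]
      ring
    have e3 : CA.pair (pm u) (pL u + pLbar u + pm u) = CA.pair (pm u) (pm u) := by
      rw [map_add, map_add, horthL _ (hpm_mem u) _ (hpL_mem u),
        horthLbar _ (hpm_mem u) _ (hpLbar_mem u)]
      ring
    rw [hsum u] at e3
    rw [h1, e1, e2, e3]; ring
  -- A = B + 2(G+Q)
  have hAB : (∑ k, CA.anchor (eSup k) (CA.pair u (eInf k)))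
      = (∑ k, CA.anchor (eInf k) (CA.pair u (eSup k)))
        + 2 * ((∑ s, CA.pair u (eInf s) * CA.pair u (eSup s)) + CA.pair (pm u) (pm u)) := by
    have hk : ∀ k, CA.anchor (eSup k) (CA.pair u (eInf k))
        = CA.anchor (eInf k) (CA.pair u (eSup k))
          + CA.pair u (CA.bracket (eSup k) (eInf k)) := by
      intro k
      have h := CA.anchor_pair (eSup k) u (eInf k)
      rw [hbru (eSup k), CA.pair_Dop, CA.pair_symm (eSup k) u] at h
      exact h
    have h2 : ∑ k, CA.pair u (CA.bracket (eSup k) (eInf k))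
        = 2 * ((∑ s, CA.pair u (eInf s) * CA.pair u (eSup s))
            + CA.pair (pm u) (pm u)) := by
      rw [← map_sum, hDterm', map_add, map_sub, hGbar, hG]
      ring
    rw [Finset.sum_congr rfl fun k _ => hk k, Finset.sum_add_distrib, h2]
  -- W = B + 2Q
  have hW : ∑ k, CA.pair (eInf k) (CA.bracket (eSup k) (pL u))
      = (∑ k, CA.anchor (eInf k) (CA.pair u (eSup k)))
        + 2 * CA.pair (pm u) (pm u) := by
    have hk : ∀ k, CA.pair (eInf k) (CA.bracket (eSup k) (pL u))
        = (∑ s, CA.pair u (eInf s) * CA.pair (eInf k) (CA.bracket (eSup k) (eSup s)))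
          + CA.anchor (eSup k) (CA.pair u (eInf k)) := by
      intro k
      rw [hpLu, CA_br_sum_right, map_sum]
      have hterm : ∀ s : Fin m,
          CA.pair (eInf k) (CA.bracket (eSup k) (CA.pair u (eInf s) • eSup s))
          = CA.pair u (eInf s) * CA.pair (eInf k) (CA.bracket (eSup k) (eSup s))
            + (if s = k then CA.anchor (eSup k) (CA.pair u (eInf s)) else 0) := by
        intro s
        rw [CA.leibniz, map_add, map_smul, map_smul, smul_eq_mul, smul_eq_mul,
          hd' s k, mul_ite, mul_one, mul_zero]
      rw [Finset.sum_congr rfl fun s _ => hterm s, Finset.sum_add_distrib,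
        Finset.sum_ite_eq' Finset.univ k
          (fun s => CA.anchor (eSup k) (CA.pair u (eInf s)))]
      simp
    have hkk : ∀ s, ∑ k, CA.pair (eInf k) (CA.bracket (eSup k) (eSup s))
        = -(2 * CA.pair u (eSup s)) := by
      intro s
      have hterm : ∀ k : Fin m, CA.pair (eInf k) (CA.bracket (eSup k) (eSup s))
          = -CA.pair (CA.bracket (eSup s) (eSup k)) (eInf k) := by
        intro k
        rw [CA.pair_symm, hLLanti k s, map_neg, LinearMap.neg_apply]
      rw [Finset.sum_congr rfl fun k _ => hterm k, Finset.sum_neg_distrib, key1 s]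
    rw [Finset.sum_congr rfl fun k _ => hk k, Finset.sum_add_distrib]
    have h3 : ∑ k, ∑ s, CA.pair u (eInf s) * CA.pair (eInf k) (CA.bracket (eSup k) (eSup s))
        = -(2 * ∑ s, CA.pair u (eInf s) * CA.pair u (eSup s)) := by
      rw [Finset.sum_comm]
      have h4 : ∀ s : Fin m,
          (∑ k, CA.pair u (eInf s) * CA.pair (eInf k) (CA.bracket (eSup k) (eSup s)))
          = CA.pair u (eInf s) * -(2 * CA.pair u (eSup s)) := fun s => by
        rw [← Finset.mul_sum, hkk s]
      rw [Finset.sum_congr rfl fun s _ => h4 s, Finset.mul_sum, ← Finset.sum_neg_distrib]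
      exact Finset.sum_congr rfl fun s _ => by ring
    rw [h3, hAB]
    ring
  -- Jacobi consequence, per (j,k)
  have hjac : ∀ j k, CA.pair (eInf k) (CA.bracket (eSup k) (CA.bracket (eSup j) (eInf j)))
      = CA.pair (eInf k) (CA.bracket (CA.bracket (eSup k) (eSup j)) (eInf j))
        - CA.pair (CA.bracket (eSup j) (eInf k)) (CA.bracket (eSup k) (eInf j)) := by
    intro j k
    have hj := congrArg (CA.pair (eInf k)) (CA.jacobi (eSup k) (eSup j) (eInf j))
    rw [map_add] at hj
    have htr := CA.anchor_pair (eSup j) (eInf k) (CA.bracket (eSup k) (eInf j))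
    rw [CA.pair_symm (eInf k) (CA.bracket (eSup k) (eInf j)), hBs k j k, CA_an_zero] at htr
    linear_combination hj - htr
  -- the double-bracket term, per (j,k)
  have hT : ∀ j k, CA.pair (eInf k) (CA.bracket (CA.bracket (eSup k) (eSup j)) (eInf j))
      = CA.anchor (eInf k) (CA.pair (CA.bracket (eSup k) (eSup j)) (eInf j))
        - CA.anchor (eInf j) (CA.pair (CA.bracket (eSup k) (eSup j)) (eInf k)) := by
    intro j k
    have hx := hspanL _ (hFtermL _ (heSup k) _ (heSup j))
    conv_lhs => rw [hx]
    rw [CA_br_sum_left, map_sum]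
    have hterm : ∀ s : Fin m,
        CA.pair (eInf k) (CA.bracket
          (CA.pair (CA.bracket (eSup k) (eSup j)) (eInf s) • eSup s) (eInf j))
        = (if s = k then
            -(CA.anchor (eInf j) (CA.pair (CA.bracket (eSup k) (eSup j)) (eInf s))) else 0)
          + (if s = j then
            CA.anchor (eInf k) (CA.pair (CA.bracket (eSup k) (eSup j)) (eInf s)) else 0) := by
      intro s
      rw [CA_br_smul_left, hdual s j, CA_D_if, smul_zero, sub_zero]
      rw [map_add, map_sub, map_smul, map_smul, smul_eq_mul, smul_eq_mul]
      rw [CA.pair_symm (eInf k) (CA.bracket (eSup s) (eInf j)), hBs s j k, mul_zero,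
        hd' s k, CA_pair_D, mul_ite, mul_one, mul_zero, mul_ite, mul_one, mul_zero,
        apply_ite (CA.anchor (eInf k)), CA_an_zero]
      split_ifs <;> ring
    rw [Finset.sum_congr rfl fun s _ => hterm s, Finset.sum_add_distrib,
      Finset.sum_ite_eq' Finset.univ k _, Finset.sum_ite_eq' Finset.univ j _]
    simp only [Finset.mem_univ, if_true]
    ring
  -- T1 = 4B
  have hT1 : ∑ j, ∑ k, CA.pair (eInf k) (CA.bracket (CA.bracket (eSup k) (eSup j)) (eInf j))
      = 4 * ∑ k, CA.anchor (eInf k) (CA.pair u (eSup k)) := by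
    rw [Finset.sum_congr rfl fun j _ => Finset.sum_congr rfl fun k _ => hT j k]
    rw [Finset.sum_congr rfl fun j (_ : j ∈ Finset.univ) => Finset.sum_sub_distrib _ _,
      Finset.sum_sub_distrib]
    have hsmm : ∑ j, ∑ k, CA.anchor (eInf j) (CA.pair (CA.bracket (eSup k) (eSup j)) (eInf k))
        = -(∑ j, ∑ k, CA.anchor (eInf k) (CA.pair (CA.bracket (eSup k) (eSup j)) (eInf j))) := by
      rw [Finset.sum_comm, ← Finset.sum_neg_distrib]
      refine Finset.sum_congr rfl fun j _ => ?_
      rw [← Finset.sum_neg_distrib]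
      refine Finset.sum_congr rfl fun k _ => ?_
      rw [hLLanti j k, map_neg, LinearMap.neg_apply, CA_an_neg]
    rw [hsmm, sub_neg_eq_add]
    have hX : ∑ j, ∑ k, CA.anchor (eInf k) (CA.pair (CA.bracket (eSup k) (eSup j)) (eInf j))
        = 2 * ∑ k, CA.anchor (eInf k) (CA.pair u (eSup k)) := by
      rw [Finset.sum_comm]
      have hper : ∀ k, ∑ j, CA.anchor (eInf k) (CA.pair (CA.bracket (eSup k) (eSup j)) (eInf j))
          = 2 * CA.anchor (eInf k) (CA.pair u (eSup k)) := by
        intro k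
        rw [← CA_an_sum, key1 k, two_mul, CA.anchor_add, two_mul]
      rw [Finset.sum_congr rfl fun k _ => hper k, Finset.mul_sum]
    rw [hX]; ring
  -- the sum over the Jacobi LHS
  have hL : ∑ j, ∑ k, CA.pair (eInf k) (CA.bracket (eSup k) (CA.bracket (eSup j) (eInf j)))
      = 2 * (∑ k, CA.anchor (eInf k) (CA.pair u (eSup k)))
        - 2 * ∑ k, CA.pair (eInf k) (CA.bracket (eSup k) (pL u)) := by
    rw [Finset.sum_comm]
    have hper : ∀ k, ∑ j, CA.pair (eInf k) (CA.bracket (eSup k) (CA.bracket (eSup j) (eInf j)))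
        = 2 * CA.anchor (eInf k) (CA.pair u (eSup k))
          - 2 * CA.pair (eInf k) (CA.bracket (eSup k) (pL u)) := by
      intro k
      rw [← map_sum, ← CA_br_sum_right, hDterm', CA.bracket_add_right]
      simp only [CA_br_sub_right, hbru (eSup k), map_add, map_sub, CA_pair_D,
        CA.pair_symm (eSup k) u]
      ring
    rw [Finset.sum_congr rfl fun k _ => hper k, Finset.sum_sub_distrib,
      ← Finset.mul_sum, ← Finset.mul_sum]
  -- the main sum S = 4B + 4Q
  have hS : ∑ j, ∑ k, CA.pair (CA.bracket (eSup j) (eInf k)) (CA.bracket (eSup k) (eInf j))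
      = 4 * (∑ k, CA.anchor (eInf k) (CA.pair u (eSup k)))
        + 4 * CA.pair (pm u) (pm u) := by
    have htot : ∑ j, ∑ k, CA.pair (eInf k) (CA.bracket (eSup k) (CA.bracket (eSup j) (eInf j)))
        = (∑ j, ∑ k, CA.pair (eInf k) (CA.bracket (CA.bracket (eSup k) (eSup j)) (eInf j)))
          - ∑ j, ∑ k, CA.pair (CA.bracket (eSup j) (eInf k)) (CA.bracket (eSup k) (eInf j)) := by
      rw [Finset.sum_congr rfl fun j (_ : j ∈ Finset.univ) =>
        Finset.sum_congr rfl fun k _ => hjac j k]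
      rw [Finset.sum_congr rfl fun j (_ : j ∈ Finset.univ) => Finset.sum_sub_distrib _ _,
        Finset.sum_sub_distrib]
    linear_combination htot - hL + hT1 + 2 * hW
  -- pairing of C₋ components
  have hpmpair : ∀ a b : E, pL a = 0 → pL b = 0 →
      CA.pair (pm a) (pm b) = CA.pair a b := by
    intro a b ha hb
    have h1 : CA.pair (pL a + pLbar a + pm a) (pL b + pLbar b + pm b)
        = CA.pair (pm a) (pm b) := by
      simp only [ha, hb, zero_add, map_add, LinearMap.add_apply]
      rw [hisoLbar _ (hpLbar_mem a) _ (hpLbar_mem b),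
        horthLbar _ (hpm_mem a) _ (hpLbar_mem b),
        CA.pair_symm (pLbar a) (pm b), horthLbar _ (hpm_mem b) _ (hpLbar_mem a)]
      ring
    rw [hsum a, hsum b] at h1
    exact h1.symm
  -- C₋ component of the D-term
  have hpm2 : pm (∑ j, CA.bracket (eSup j) (eInf j)) = pm u + pm u := by
    rw [hDterm', map_add, map_sub, hpm_L _ (hpL_mem u), sub_zero]
  -- first part of R
  have hpart1 : ∑ j, ∑ k, (3 : C) *
      CA.pair (pm (CA.bracket (eSup j) (eInf j))) (pm (CA.bracket (eSup k) (eInf k)))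
      = 12 * CA.pair (pm u) (pm u) := by
    have hinner : ∀ j, ∑ k, (3 : C) *
        CA.pair (pm (CA.bracket (eSup j) (eInf j))) (pm (CA.bracket (eSup k) (eInf k)))
        = 3 * CA.pair (pm (CA.bracket (eSup j) (eInf j))) (pm u + pm u) := by
      intro j
      rw [← Finset.mul_sum, ← map_sum, ← map_sum, hpm2]
    rw [Finset.sum_congr rfl fun j _ => hinner j]
    have houter : ∑ j, (3 : C) *
        CA.pair (pm (CA.bracket (eSup j) (eInf j))) (pm u + pm u)
        = 3 * CA.pair (pm u + pm u) (pm u + pm u) := by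
      rw [← Finset.mul_sum]
      congr 1
      rw [← LinearMap.sum_apply, ← map_sum, ← map_sum, hpm2]
    rw [houter]
    simp only [map_add, LinearMap.add_apply]
    ring
  -- second part of R
  have hpart2 : ∑ j, ∑ k,
      CA.pair (pm (CA.bracket (eSup j) (eInf k))) (pm (CA.bracket (eSup k) (eInf j)))
      = 4 * (∑ k, CA.anchor (eInf k) (CA.pair u (eSup k)))
        + 4 * CA.pair (pm u) (pm u) := by
    rw [Finset.sum_congr rfl fun j (_ : j ∈ Finset.univ) =>
      Finset.sum_congr rfl fun k _ => hpmpair _ _ (hnoL j k) (hnoL k j)]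
    exact hS
  -- the right-hand side term
  have hRHS : ∑ j, CA.pair (CA.bracket (eSup j) u) (eInf j)
      = ∑ j, CA.anchor (eInf j) (CA.pair u (eSup j)) := by
    refine Finset.sum_congr rfl fun j _ => ?_
    rw [hbru (eSup j), CA.pair_Dop, CA.pair_symm (eSup j) u]
  -- assemble
  have hsplit : ∑ j, ∑ k,
      ((3 : C) * CA.pair (pm (CA.bracket (eSup j) (eInf j))) (pm (CA.bracket (eSup k) (eInf k)))
        - CA.pair (pm (CA.bracket (eSup j) (eInf k))) (pm (CA.bracket (eSup k) (eInf j))))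
      = (∑ j, ∑ k, (3 : C) *
          CA.pair (pm (CA.bracket (eSup j) (eInf j))) (pm (CA.bracket (eSup k) (eInf k))))
        - ∑ j, ∑ k,
          CA.pair (pm (CA.bracket (eSup j) (eInf k))) (pm (CA.bracket (eSup k) (eInf j))) := by
    rw [Finset.sum_congr rfl fun j (_ : j ∈ Finset.univ) => Finset.sum_sub_distrib _ _,
      Finset.sum_sub_distrib]
  rw [hsplit, hpart1, hpart2, hRHS]
  ring
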